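/- Let G be a graph of order n with no subgraph K_{2,k+1} for some k ≥ 1, and spectral radius μ. Then μ² − μ ≤ k(n−1). -/

import Mathlib

open Matrix Finset

def IsSpecRad {n : ℕ} (A : Matrix (Fin n) (Fin n) ℝ) (μ : ℝ) : Prop :=
  Module.End.HasEigenvalue A.mulVecLin μ ∧
    ∀ ν : ℝ, Module.End.HasEigenvalue A.mulVecLin ν → ν ≤ μ

lemma common_nbrs_le {n k : ℕ} (G : SimpleGraph (Fin n)) [DecidableRel G.Adj]
    (hfree : ¬ ∃ f : completeBipartiteGraph (Fin 2) (Fin (k + 1)) →g G,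
      Function.Injective f)
    {i j : Fin n} (hij : i ≠ j) :
    (univ.filter (fun u => G.Adj i u ∧ G.Adj u j)).card ≤ k := by
  by_contra h
  push_neg at h
  obtain ⟨T, hTsub, hTcard⟩ := Finset.exists_subset_card_eq (n := k+1) h
  set g := T.orderEmbOfFin hTcard with hg
  have hadj : ∀ b : Fin (k + 1), G.Adj i (g b) ∧ G.Adj (g b) j := by
    intro b
    have := hTsub (T.orderEmbOfFin_mem hTcard b)
    simpa using this
  have hne : ∀ (a : Fin 2) (b : Fin (k + 1)), ![i, j] a ≠ g b := by
    intro a b hh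
    fin_cases a
    · simp only at hh
      exact (G.ne_of_adj (hadj b).1) hh
    · simp only at hh
      exact (G.ne_of_adj (hadj b).2.symm) hh
  refine hfree ⟨⟨Sum.elim ![i, j] (fun b => g b), ?_⟩, ?_⟩
  · rintro (a | a) (b | b) hab
    · simp at hab
    · simp only [Sum.elim_inl, Sum.elim_inr]
      fin_cases a
      · exact (hadj b).1
      · exact (hadj b).2.symm
    · simp only [Sum.elim_inl, Sum.elim_inr]
      fin_cases b
      · exact (hadj a).1.symm
      · exact (hadj a).2
    · simp at hab
  · rintro (a | a) (b | b) huv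
    · fin_cases a <;> fin_cases b <;>
        first
          | rfl
          | exact absurd huv hij
          | exact absurd huv.symm hij
    · exact absurd huv (hne a b)
    · exact absurd huv.symm (hne b a)
    · exact congrArg Sum.inr ((T.orderEmbOfFin hTcard).injective huv)

theorem K2k_free_spectral (n k : ℕ) (hk : 1 ≤ k)
    (G : SimpleGraph (Fin n)) [DecidableRel G.Adj] (μ : ℝ)
    (hfree : ¬ ∃ f : completeBipartiteGraph (Fin 2) (Fin (k + 1)) →g G,
      Function.Injective f)
    (hμ : IsSpecRad (G.adjMatrix ℝ) μ) :
    μ ^ 2 - μ ≤ k * ((n : ℝ) - 1) := by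
  set A := G.adjMatrix ℝ with hAdef
  -- basic facts about A
  have hA0 : ∀ i j, 0 ≤ A i j := by
    intro i j; rw [hAdef, SimpleGraph.adjMatrix_apply]; split_ifs <;> norm_num
  have hA1 : ∀ i j, A i j ≤ 1 := by
    intro i j; rw [hAdef, SimpleGraph.adjMatrix_apply]; split_ifs <;> norm_num
  have hAdiag : ∀ i, A i i = 0 := by
    intro i; simp [hAdef]
  have hsymm : ∀ a b, A a b = A b a := by
    intro a b; simp [hAdef, SimpleGraph.adjMatrix_apply, G.adj_comm]
  have hherm : A.IsHermitian := by
    unfold Matrix.IsHermitian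
    ext a b
    simp only [Matrix.conjTranspose_apply, star_trivial]
    exact hsymm b a
  -- eigenvalue transfer
  have hasEig : ∀ (v : Fin n → ℝ) (ν : ℝ), v ≠ 0 → A *ᵥ v = ν • v →
      Module.End.HasEigenvalue A.mulVecLin ν := by
    intro v ν hv h
    exact Module.End.hasEigenvalue_of_hasEigenvector
      ⟨Module.End.mem_eigenspace_iff.mpr (by simpa using h), hv⟩
  -- the matrix μ•1 - A is PSD
  set M := μ • (1 : Matrix (Fin n) (Fin n) ℝ) - A with hMdef
  have hMherm : M.IsHermitian := by
    unfold Matrix.IsHermitian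
    ext a b
    simp only [hMdef, Matrix.conjTranspose_apply, Matrix.sub_apply, Matrix.smul_apply,
      Matrix.one_apply, star_trivial, smul_eq_mul]
    rw [hsymm a b]
    by_cases hab : a = b <;> simp [hab, eq_comm]
  have hPSD : M.PosSemidef := by
    apply hMherm.posSemidef_iff_eigenvalues_nonneg.mpr
    intro i
    set ν := hMherm.eigenvalues i with hν
    have hv : M *ᵥ ⇑(hMherm.eigenvectorBasis i) = ν • ⇑(hMherm.eigenvectorBasis i) :=
      hMherm.mulVec_eigenvectorBasis i
    set v : Fin n → ℝ := ⇑(hMherm.eigenvectorBasis i) with hvdef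
    have hvne : v ≠ 0 := by
      intro h0
      have h1 : hMherm.eigenvectorBasis i = 0 := by
        ext l; exact congrFun h0 l
      have := hMherm.eigenvectorBasis.orthonormal.1 i
      rw [h1] at this
      simp at this
    have hAv : A *ᵥ v = (μ - ν) • v := by
      have h2 : μ • v - A *ᵥ v = ν • v := by
        rw [← hv, hMdef, Matrix.sub_mulVec, Matrix.smul_mulVec, Matrix.one_mulVec]
      rw [sub_smul, ← h2]
      abel
    have := hμ.2 (μ - ν) (hasEig v (μ - ν) hvne hAv)
    rw [Pi.zero_apply]
    linarith
  -- eigenvector of A for μ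
  obtain ⟨x, hx⟩ := hμ.1.exists_hasEigenvector
  have hxe : A *ᵥ x = μ • x := by
    have := Module.End.mem_eigenspace_iff.mp hx.1
    simpa using this
  have hxne : x ≠ 0 := hx.2
  set y : Fin n → ℝ := fun i => |x i| with hydef
  have hy0 : ∀ i, 0 ≤ y i := fun i => abs_nonneg _
  -- quadratic form computations
  have hquad : ∀ u : Fin n → ℝ, u ⬝ᵥ (A *ᵥ u) = ∑ i, ∑ j, A i j * (u i * u j) := by
    intro u
    simp only [dotProduct, mulVec, Finset.mul_sum]
    congr 1; ext i; congr 1; ext j; ring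
  have h1 : x ⬝ᵥ (A *ᵥ x) ≤ y ⬝ᵥ (A *ᵥ y) := by
    rw [hquad, hquad]
    apply Finset.sum_le_sum; intro i _
    apply Finset.sum_le_sum; intro j _
    apply mul_le_mul_of_nonneg_left _ (hA0 i j)
    calc x i * x j ≤ |x i * x j| := le_abs_self _
    _ = y i * y j := abs_mul _ _
  have h2 : y ⬝ᵥ y = x ⬝ᵥ x := by
    simp only [dotProduct, hydef, abs_mul_abs_self]
  have h3 : x ⬝ᵥ (A *ᵥ x) = μ * (x ⬝ᵥ x) := by
    rw [hxe, dotProduct_smul, smul_eq_mul]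
  have hMyq : ∀ u : Fin n → ℝ, u ⬝ᵥ (M *ᵥ u) = μ * (u ⬝ᵥ u) - u ⬝ᵥ (A *ᵥ u) := by
    intro u
    rw [hMdef, Matrix.sub_mulVec, Matrix.smul_mulVec, Matrix.one_mulVec,
      dotProduct_sub, dotProduct_smul, smul_eq_mul]
  have hylez : y ⬝ᵥ (M *ᵥ y) ≤ 0 := by
    rw [hMyq, h2]
    linarith
  have hygez : 0 ≤ y ⬝ᵥ (M *ᵥ y) := by
    have := hPSD.dotProduct_mulVec_nonneg y
    simpa using this
  have hMy0 : M *ᵥ y = 0 := by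
    apply (hPSD.dotProduct_mulVec_zero_iff y).mp
    simp only [star_trivial]
    linarith
  have hAy : A *ᵥ y = μ • y := by
    have h4 : μ • y - A *ᵥ y = 0 := by
      rw [← hMy0, hMdef, Matrix.sub_mulVec, Matrix.smul_mulVec, Matrix.one_mulVec]
    exact (sub_eq_zero.mp h4).symm
  have hyne : y ≠ 0 := by
    intro h0
    apply hxne
    funext l
    have := congrFun h0 l
    simpa [hydef, abs_eq_zero] using this
  -- pick vertex with max y
  obtain ⟨i₀, hi₀⟩ := Function.ne_iff.mp hyne
  have hy₀pos : 0 < y i₀ := lt_of_le_of_ne (hy0 i₀) (by simpa [eq_comm] using hi₀)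
  obtain ⟨i, -, hi⟩ := Finset.exists_max_image univ y ⟨i₀, Finset.mem_univ i₀⟩
  have hyi : 0 < y i := lt_of_lt_of_le hy₀pos (hi i₀ (Finset.mem_univ i₀))
  have hyj : ∀ j, y j ≤ y i := fun j => hi j (Finset.mem_univ j)
  have hn1 : 1 ≤ n := i.pos
  -- A² entry bounds
  have hAA : ∀ j, j ≠ i → (A * A) i j ≤ (k : ℝ) := by
    intro j hj
    have hcard := common_nbrs_le G hfree (Ne.symm hj)
    have hval : (A * A) i j = ((univ.filter (fun u => G.Adj i u ∧ G.Adj u j)).card : ℝ) := by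
      rw [hAdef, SimpleGraph.adjMatrix_mul_apply]
      have : ∀ u ∈ G.neighborFinset i, G.adjMatrix ℝ u j = if G.Adj u j then 1 else 0 :=
        fun u _ => SimpleGraph.adjMatrix_apply G u j
      rw [Finset.sum_congr rfl this, Finset.sum_boole]
      norm_num
      congr 1
      ext u
      simp [SimpleGraph.mem_neighborFinset]
    rw [hval]
    exact_mod_cast hcard
  -- row sum of A
  have hrow : ∑ j, A i j = ((G.degree i : ℕ) : ℝ) := by
    rw [hAdef]
    simp only [SimpleGraph.adjMatrix_apply]
    rw [Finset.sum_boole]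
    congr 1
    rw [SimpleGraph.degree, SimpleGraph.neighborFinset_eq_filter]
  have hdiagAA : (A * A) i i = ((G.degree i : ℕ) : ℝ) := by
    rw [hAdef]
    exact_mod_cast G.adjMatrix_mul_self_apply_self i
  -- the key estimate
  have key : μ ^ 2 * y i - μ * y i = ∑ j, ((A * A) i j - A i j) * y j := by
    have e1 : ((A * A) *ᵥ y) i = μ ^ 2 * y i := by
      rw [← Matrix.mulVec_mulVec, hAy, Matrix.mulVec_smul, hAy, smul_smul]
      simp [sq]
    have e2 : (A *ᵥ y) i = μ * y i := by rw [hAy]; simp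
    have e1' : ∑ j, (A * A) i j * y j = μ ^ 2 * y i := by
      rw [← e1]; rfl
    have e2' : ∑ j, A i j * y j = μ * y i := by
      rw [← e2]; rfl
    rw [← e1', ← e2', ← Finset.sum_sub_distrib]
    congr 1; ext j; ring
  set c : Fin n → ℝ := fun j => if j = i then (A * A) i i else (k : ℝ) - A i j with hc
  have term : ∀ j, ((A * A) i j - A i j) * y j ≤ c j * y i := by
    intro j
    by_cases hj : j = i
    · subst hj
      simp [hc, hAdiag]
    · simp only [hc, if_neg hj]
      have hBk : (A * A) i j - A i j ≤ (k : ℝ) - A i j := by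
        have := hAA j hj
        linarith
      have hk0 : 0 ≤ (k : ℝ) - A i j := by
        have := hA1 i j
        have : (1 : ℝ) ≤ k := by exact_mod_cast hk
        linarith [hA1 i j]
      rcases le_or_gt 0 ((A * A) i j - A i j) with hB | hB
      · calc ((A * A) i j - A i j) * y j ≤ ((A * A) i j - A i j) * y i :=
              mul_le_mul_of_nonneg_left (hyj j) hB
          _ ≤ ((k : ℝ) - A i j) * y i := mul_le_mul_of_nonneg_right hBk (le_of_lt hyi)
      · calc ((A * A) i j - A i j) * y j ≤ 0 :=
              mul_nonpos_of_nonpos_of_nonneg (le_of_lt hB) (hy0 j)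
          _ ≤ ((k : ℝ) - A i j) * y i := mul_nonneg hk0 (le_of_lt hyi)
  have csum : ∑ j, c j = (k : ℝ) * ((n : ℝ) - 1) := by
    rw [← Finset.add_sum_erase _ c (Finset.mem_univ i)]
    have hci : c i = ((G.degree i : ℕ) : ℝ) := by rw [hc]; simp [hdiagAA]
    have hrest : ∑ j ∈ univ.erase i, c j = ∑ j ∈ univ.erase i, ((k : ℝ) - A i j) := by
      apply Finset.sum_congr rfl
      intro j hj
      rw [hc]
      simp [Finset.ne_of_mem_erase hj]
    have hAerase : ∑ j ∈ univ.erase i, A i j = ((G.degree i : ℕ) : ℝ) := by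
      rw [← hrow, ← Finset.add_sum_erase _ _ (Finset.mem_univ i), hAdiag, zero_add]
    have hcarderase : ((univ.erase i).card : ℝ) = (n : ℝ) - 1 := by
      rw [Finset.card_erase_of_mem (Finset.mem_univ i)]
      simp only [Finset.card_univ, Fintype.card_fin]
      rw [Nat.cast_sub hn1]
      norm_num
    rw [hci, hrest, Finset.sum_sub_distrib, hAerase, Finset.sum_const, nsmul_eq_mul,
      hcarderase]
    ring
  have final : (μ ^ 2 - μ) * y i ≤ (k : ℝ) * ((n : ℝ) - 1) * y i := by
    have hsum : ∑ j, ((A * A) i j - A i j) * y j ≤ ∑ j, c j * y i :=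
      Finset.sum_le_sum (fun j _ => term j)
    rw [← Finset.sum_mul, csum] at hsum
    calc (μ ^ 2 - μ) * y i = μ ^ 2 * y i - μ * y i := by ring
      _ = ∑ j, ((A * A) i j - A i j) * y j := key
      _ ≤ (k : ℝ) * ((n : ℝ) - 1) * y i := hsum
  exact le_of_mul_le_mul_right final hyi
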